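/- Let (X, π) be a finite symmetric two-player game with relative payoff game (X, Δ). Imitation is subject to a money pump in (X, π) if and only if (X, Δ) is a generalized rock-paper-scissors game. -/
import Mathlib


/-- The imitator's action sequence: `y₀` initially; imitate the opponent's previous
action iff it earned a strictly positive relative payoff. -/
noncomputable def imitSeq {X : Type*} (Δ : X → X → ℝ) (x : ℕ → X) (y0 : X) : ℕ → X
  | 0 => y0
  | t + 1 => if 0 < Δ (x t) (imitSeq Δ x y0 t) then x t else imitSeq Δ x y0 t

/-- Imitation is subject to a money pump. -/
def MoneyPump {X : Type*} (Δ : X → X → ℝ) : Prop :=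
  ∀ M : ℝ, ∃ (y0 : X) (x : ℕ → X) (T : ℕ),
    M < ∑ t ∈ Finset.range (T + 1), Δ (x t) (imitSeq Δ x y0 t)

/-- A symmetric zero-sum game is a generalized rock-paper-scissors game if there is a
nonempty subset `S` of actions such that for every `y ∈ S` there is `x ∈ S` with
strictly positive payoff. -/
def GeneralizedRPS {X : Type*} (Δ : X → X → ℝ) : Prop :=
  ∃ S : Set X, S.Nonempty ∧ ∀ y ∈ S, ∃ x ∈ S, 0 < Δ x y

theorem stmt0 {X : Type*} [Fintype X] [Nonempty X] (π : X → X → ℝ)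
    (Δ : X → X → ℝ) (hΔ : ∀ x y, Δ x y = π x y - π y x) :
    MoneyPump Δ ↔ GeneralizedRPS Δ := by
  classical
  constructor
  · -- MoneyPump → GRPS (contrapositive)
    intro hmp
    by_contra hg
    -- relation: a beats b
    set r : X → X → Prop := fun a b => 0 < Δ a b with hr
    have hwf : WellFounded r := by
      rw [WellFounded.wellFounded_iff_has_min]
      intro s hs
      by_contra h
      push_neg at h
      exact hg ⟨s, hs, fun y hy => h y hy⟩
    -- rank function
    set ρ : X → ℕ := fun a => (Finset.univ.filter (fun z => Relation.TransGen r z a)).card with hρ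
    have hρlt : ∀ a b, r a b → ρ a < ρ b := by
      intro a b hab
      apply Finset.card_lt_card
      constructor
      · intro z hz
        simp only [hρ, Finset.mem_filter, Finset.mem_univ, true_and] at hz ⊢
        exact hz.tail hab
      · intro hsub
        have ha : a ∈ Finset.univ.filter (fun z => Relation.TransGen r z b) := by
          simp only [Finset.mem_filter, Finset.mem_univ, true_and]
          exact Relation.TransGen.single hab
        have := hsub ha
        simp only [Finset.mem_filter, Finset.mem_univ, true_and] at this
        exact (hwf.transGen).isIrrefl.irrefl a this
    have hρle : ∀ a, ρ a ≤ Fintype.card X := fun a => by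
      simpa [hρ] using Finset.card_filter_le Finset.univ (fun z => Relation.TransGen r z a)
    -- uniform bound on payoffs
    have hne : (Finset.univ : Finset (X × X)).Nonempty := Finset.univ_nonempty
    set B : ℝ := Finset.univ.sup' hne (fun p : X × X => Δ p.1 p.2) with hB
    set B' : ℝ := max B 0 with hB'
    have hB'0 : 0 ≤ B' := le_max_right _ _
    have hBle : ∀ a b, Δ a b ≤ B' := fun a b =>
      le_trans (Finset.le_sup' (fun p : X × X => Δ p.1 p.2) (Finset.mem_univ (a, b)))
        (le_max_left _ _)
    -- contradiction with money pump at the universal bound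
    obtain ⟨y0, x, T, hT⟩ := hmp (B' * Fintype.card X)
    set y : ℕ → X := imitSeq Δ x y0 with hy
    have step : ∀ t, Δ (x t) (y t) ≤ B' * ((ρ (y t) : ℝ) - (ρ (y (t + 1)) : ℝ)) := by
      intro t
      by_cases h : 0 < Δ (x t) (y t)
      · have hy1 : y (t + 1) = x t := by
          simp only [hy, imitSeq]
          rw [if_pos h]
        have hlt : ρ (y (t + 1)) < ρ (y t) := by
          apply hρlt
          rw [hy1]; exact h
        have h1 : (1 : ℝ) ≤ (ρ (y t) : ℝ) - (ρ (y (t + 1)) : ℝ) := by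
          have := Nat.succ_le_of_lt hlt
          push_cast
          have : (ρ (y (t + 1)) : ℝ) + 1 ≤ (ρ (y t) : ℝ) := by exact_mod_cast this
          linarith
        calc Δ (x t) (y t) ≤ B' := hBle _ _
          _ = B' * 1 := (mul_one _).symm
          _ ≤ B' * ((ρ (y t) : ℝ) - (ρ (y (t + 1)) : ℝ)) := by
              exact mul_le_mul_of_nonneg_left h1 hB'0
      · have hy1 : y (t + 1) = y t := by
          simp only [hy, imitSeq]
          rw [if_neg h]
        rw [hy1]
        simp only [sub_self, mul_zero]
        exact le_of_not_gt h
    have hsum : ∑ t ∈ Finset.range (T + 1), Δ (x t) (y t) ≤ B' * Fintype.card X := by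
      calc ∑ t ∈ Finset.range (T + 1), Δ (x t) (y t)
          ≤ ∑ t ∈ Finset.range (T + 1), B' * ((ρ (y t) : ℝ) - (ρ (y (t + 1)) : ℝ)) :=
            Finset.sum_le_sum (fun t _ => step t)
        _ = B' * ∑ t ∈ Finset.range (T + 1), ((ρ (y t) : ℝ) - (ρ (y (t + 1)) : ℝ)) := by
            rw [Finset.mul_sum]
        _ = B' * ((ρ (y 0) : ℝ) - (ρ (y (T + 1)) : ℝ)) := by
            rw [Finset.sum_range_sub' (fun t => (ρ (y t) : ℝ))]
        _ ≤ B' * Fintype.card X := by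
            apply mul_le_mul_of_nonneg_left _ hB'0
            have h1 : (ρ (y 0) : ℝ) ≤ Fintype.card X := by exact_mod_cast hρle (y 0)
            have h2 : (0 : ℝ) ≤ (ρ (y (T + 1)) : ℝ) := Nat.cast_nonneg _
            linarith
    exact absurd hT (not_lt.mpr hsum)
  · -- GRPS → MoneyPump
    rintro ⟨S, ⟨s0, hs0⟩, hS⟩ M
    choose! b hbS hbpos using hS
    -- trajectory staying in S
    set z : ℕ → X := fun t => b^[t] s0 with hz
    have hz0 : z 0 = s0 := rfl
    have hzsucc : ∀ t, z (t + 1) = b (z t) := by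
      intro t
      simp only [hz, Function.iterate_succ_apply']
    have hzS : ∀ t, z t ∈ S := by
      intro t
      induction t with
      | zero => exact hs0
      | succ n ih => rw [hzsucc]; exact hbS _ ih
    -- the opponent always plays the next element of z
    set x : ℕ → X := fun t => z (t + 1) with hx
    have hyz : ∀ t, imitSeq Δ x s0 t = z t := by
      intro t
      induction t with
      | zero => rfl
      | succ n ih =>
        have hpos : 0 < Δ (x n) (imitSeq Δ x s0 n) := by
          rw [ih, hx]
          simp only [hzsucc]
          exact hbpos _ (hzS n)
        simp only [imitSeq]
        rw [if_pos hpos]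
    -- positive lower bound on each step
    set F : Finset (X × X) := Finset.univ.filter (fun p => 0 < Δ p.1 p.2) with hF
    have hFne : F.Nonempty := by
      refine ⟨(b s0, s0), ?_⟩
      simp only [hF, Finset.mem_filter, Finset.mem_univ, true_and]
      exact hbpos _ hs0
    set ε : ℝ := F.inf' hFne (fun p => Δ p.1 p.2) with hε
    have hεpos : 0 < ε := by
      rw [hε, Finset.lt_inf'_iff]
      intro p hp
      simpa [hF, Finset.mem_filter] using hp
    have hstep : ∀ t, ε ≤ Δ (x t) (imitSeq Δ x s0 t) := by
      intro t
      apply Finset.inf'_le (fun p : X × X => Δ p.1 p.2) (b := (x t, imitSeq Δ x s0 t))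
      simp only [hF, Finset.mem_filter, Finset.mem_univ, true_and]
      rw [hyz, hx]
      simp only [hzsucc]
      exact hbpos _ (hzS t)
    obtain ⟨n, hn⟩ := exists_nat_gt (M / ε)
    refine ⟨s0, x, n, ?_⟩
    have hsum : (n + 1 : ℝ) * ε ≤ ∑ t ∈ Finset.range (n + 1), Δ (x t) (imitSeq Δ x s0 t) := by
      have := Finset.card_nsmul_le_sum (Finset.range (n + 1))
        (fun t => Δ (x t) (imitSeq Δ x s0 t)) ε (fun t _ => hstep t)
      simpa [Finset.card_range, nsmul_eq_mul] using this
    have hMn : M < (n : ℝ) * ε := (div_lt_iff₀ hεpos).mp hn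
    have : (n : ℝ) * ε ≤ (n + 1 : ℝ) * ε := by nlinarith
    linarith
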